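/- Fix a slot i and a power budget p > 0. Suppose (x*, t*) is an optimal solution of the SB-SLP problem in slot i (maximize t over pairs (x, t) with CI_i(x, t) and ‖x‖² ≤ p) and t* > 0. Then ‖x*‖² = p, and x*/t* is an optimal solution of the PM-SLP problem in slot i (minimize ‖x‖² over {x ∈ ℂ^{N_t} : CI_i(x, 1)}) with optimal value ‖x*/t*‖² = p/(t*)². -/
import Mathlib


open scoped BigOperators

/-- The constructive-interference (CI) constraint in a given symbol slot:
`CI Nt Nr M h s γ σ x t` holds iff for every user `k`,
`Re((h_kᵀ x)/s_k) − |Im((h_kᵀ x)/s_k)| / tan(π/M) ≥ t·√(γ_k)·σ`. -/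
noncomputable def CI (Nt Nr M : ℕ) (h : Fin Nr → Fin Nt → ℂ)
    (s : Fin Nr → ℂ) (γ : Fin Nr → ℝ) (σ : ℝ)
    (x : Fin Nt → ℂ) (t : ℝ) : Prop :=
  ∀ k : Fin Nr,
    ((∑ j, h k j * x j) / s k).re -
        |((∑ j, h k j * x j) / s k).im| / Real.tan (Real.pi / M) ≥
      t * Real.sqrt (γ k) * σ

lemma CI_smul (Nt Nr M : ℕ) (h : Fin Nr → Fin Nt → ℂ)
    (s : Fin Nr → ℂ) (γ : Fin Nr → ℝ) (σ : ℝ)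
    (x : Fin Nt → ℂ) (t : ℝ) (c : ℝ) (hc : 0 ≤ c)
    (H : CI Nt Nr M h s γ σ x t) : CI Nt Nr M h s γ σ (c • x) (c * t) := by
  intro k
  have hsum : (∑ j, h k j * (c • x) j) = (c : ℂ) * ∑ j, h k j * x j := by
    rw [Finset.mul_sum]
    refine Finset.sum_congr rfl fun j _ => ?_
    simp [Pi.smul_apply, Complex.real_smul]
    ring
  have hdiv : (∑ j, h k j * (c • x) j) / s k
      = (c : ℂ) * ((∑ j, h k j * x j) / s k) := by
    rw [hsum, mul_div_assoc]
  have hre : ((∑ j, h k j * (c • x) j) / s k).re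
      = c * ((∑ j, h k j * x j) / s k).re := by
    rw [hdiv]; simp [Complex.mul_re]
  have him : ((∑ j, h k j * (c • x) j) / s k).im
      = c * ((∑ j, h k j * x j) / s k).im := by
    rw [hdiv]; simp [Complex.mul_im]
  have hk := H k
  have := mul_le_mul_of_nonneg_left hk hc
  calc c * t * Real.sqrt (γ k) * σ
      = c * (t * Real.sqrt (γ k) * σ) := by ring
    _ ≤ c * (((∑ j, h k j * x j) / s k).re -
        |((∑ j, h k j * x j) / s k).im| / Real.tan (Real.pi / M)) := this
    _ = ((∑ j, h k j * (c • x) j) / s k).re -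
        |((∑ j, h k j * (c • x) j) / s k).im| / Real.tan (Real.pi / M) := by
        rw [hre, him, abs_mul, abs_of_nonneg hc]; ring

lemma sum_smul_sq (Nt : ℕ) (x : Fin Nt → ℂ) (c : ℝ) :
    (∑ j, ‖(c • x) j‖ ^ 2) = c ^ 2 * ∑ j, ‖x j‖ ^ 2 := by
  rw [Finset.mul_sum]
  refine Finset.sum_congr rfl fun j _ => ?_
  simp [Pi.smul_apply, norm_smul, mul_pow, Real.norm_eq_abs, sq_abs]

/-- SB-SLP optimum `(x*, t*)` with `t* > 0` has active power constraint `‖x*‖² = p`,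
and `x*/t*` is a PM-SLP optimum with value `p/(t*)²`. -/
theorem stmt4 (Nt Nr Ns M : ℕ) (hNt : 0 < Nt) (hNr : 0 < Nr) (hNs : 0 < Ns)
    (hM : 3 ≤ M)
    (h : Fin Nr → Fin Nt → ℂ)
    (s : Fin Nr → Fin Ns → ℂ) (hs : ∀ k i, s k i ≠ 0)
    (γ : Fin Nr → Fin Ns → ℝ) (hγ : ∀ k i, 0 ≤ γ k i)
    (σ : ℝ) (hσ : 0 < σ)
    (i : Fin Ns) (p : ℝ) (hp : 0 < p)
    (xstar : Fin Nt → ℂ) (tstar : ℝ) (htstar : 0 < tstar)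
    (hfeas : CI Nt Nr M h (fun k => s k i) (fun k => γ k i) σ xstar tstar)
    (hpow : ∑ j, ‖xstar j‖ ^ 2 ≤ p)
    (hopt : ∀ (x : Fin Nt → ℂ) (t : ℝ),
      CI Nt Nr M h (fun k => s k i) (fun k => γ k i) σ x t →
      (∑ j, ‖x j‖ ^ 2 ≤ p) → t ≤ tstar) :
    (∑ j, ‖xstar j‖ ^ 2 = p) ∧
    CI Nt Nr M h (fun k => s k i) (fun k => γ k i) σ ((1 / tstar) • xstar) 1 ∧
    (∀ y : Fin Nt → ℂ,
      CI Nt Nr M h (fun k => s k i) (fun k => γ k i) σ y 1 →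
      ∑ j, ‖((1 / tstar) • xstar) j‖ ^ 2 ≤ ∑ j, ‖y j‖ ^ 2) ∧
    (∑ j, ‖((1 / tstar) • xstar) j‖ ^ 2 = p / tstar ^ 2) := by
  set S := ∑ j, ‖xstar j‖ ^ 2 with hS
  have hS0 : 0 ≤ S := Finset.sum_nonneg fun j _ => sq_nonneg _
  -- Part 1: S = p
  have hSp : S = p := by
    by_contra hne
    have hlt : S < p := lt_of_le_of_ne hpow hne
    set m := max S (p / 2) with hm
    have hm0 : 0 < m := lt_max_of_lt_right (by linarith)
    have hmp : m < p := max_lt hlt (by linarith)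
    set c := Real.sqrt (p / m) with hc
    have hc0 : 0 ≤ c := Real.sqrt_nonneg _
    have hc1 : 1 < c := by
      rw [hc]
      have : (1 : ℝ) < p / m := (one_lt_div hm0).mpr hmp
      calc (1 : ℝ) = Real.sqrt 1 := by simp
        _ < Real.sqrt (p / m) := Real.sqrt_lt_sqrt (by norm_num) this
    have hcsq : c ^ 2 = p / m := by
      rw [hc, sq, Real.mul_self_sqrt (le_of_lt (div_pos hp hm0))]
    have hCI := CI_smul Nt Nr M h (fun k => s k i) (fun k => γ k i) σ
      xstar tstar c hc0 hfeas
    have hpow' : (∑ j, ‖(c • xstar) j‖ ^ 2) ≤ p := by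
      rw [sum_smul_sq, ← hS, hcsq]
      have hSm : S ≤ m := le_max_left _ _
      calc p / m * S ≤ p / m * m :=
            mul_le_mul_of_nonneg_left hSm (le_of_lt (div_pos hp hm0))
        _ = p := div_mul_cancel₀ p (ne_of_gt hm0)
    have := hopt _ _ hCI hpow'
    nlinarith
  -- Part 2: CI for the scaled vector
  have htinv : (0 : ℝ) ≤ 1 / tstar := by positivity
  have hCI2 : CI Nt Nr M h (fun k => s k i) (fun k => γ k i) σ
      ((1 / tstar) • xstar) 1 := by
    have := CI_smul Nt Nr M h (fun k => s k i) (fun k => γ k i) σ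
      xstar tstar (1 / tstar) htinv hfeas
    rwa [one_div_mul_cancel (ne_of_gt htstar)] at this
  -- value of scaled vector
  have hval : (∑ j, ‖((1 / tstar) • xstar) j‖ ^ 2) = p / tstar ^ 2 := by
    rw [sum_smul_sq, ← hS, hSp]
    field_simp
  refine ⟨hSp, hCI2, ?_, hval⟩
  intro y hy
  rw [hval]
  set T := ∑ j, ‖y j‖ ^ 2 with hT
  have hT0 : 0 ≤ T := Finset.sum_nonneg fun j _ => sq_nonneg _
  by_contra hcon
  push_neg at hcon
  -- T < p / tstar^2; scale y to get a better t
  set m := max T (p / (tstar + 1) ^ 2) with hm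
  have hden : (0 : ℝ) < (tstar + 1) ^ 2 := by positivity
  have hm0 : 0 < m := lt_max_of_lt_right (div_pos hp hden)
  have hmlt : m < p / tstar ^ 2 := by
    refine max_lt hcon ?_
    apply div_lt_div_of_pos_left hp (by positivity)
    nlinarith
  set c := Real.sqrt (p / m) with hc
  have hpm : (0 : ℝ) < p / m := div_pos hp hm0
  have hc0 : 0 ≤ c := Real.sqrt_nonneg _
  have hcsq : c ^ 2 = p / m := by
    rw [hc, sq, Real.mul_self_sqrt (le_of_lt hpm)]
  have hctstar : tstar < c := by
    have h1 : tstar ^ 2 < p / m := by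
      rw [lt_div_iff₀ hm0]
      calc tstar ^ 2 * m < tstar ^ 2 * (p / tstar ^ 2) := by
            exact mul_lt_mul_of_pos_left hmlt (by positivity)
        _ = p := by field_simp
    calc tstar = Real.sqrt (tstar ^ 2) := by
          rw [Real.sqrt_sq (le_of_lt htstar)]
      _ < Real.sqrt (p / m) := Real.sqrt_lt_sqrt (sq_nonneg _) h1
  have hCIy := CI_smul Nt Nr M h (fun k => s k i) (fun k => γ k i) σ
    y 1 c hc0 hy
  rw [mul_one] at hCIy
  have hpowy : (∑ j, ‖(c • y) j‖ ^ 2) ≤ p := by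
    rw [sum_smul_sq, ← hT, hcsq]
    have hTm : T ≤ m := le_max_left _ _
    calc p / m * T ≤ p / m * m := mul_le_mul_of_nonneg_left hTm (le_of_lt hpm)
      _ = p := div_mul_cancel₀ p (ne_of_gt hm0)
  have := hopt _ _ hCIy hpowy
  linarith
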